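/- arXiv:2502.14436 — 2 statements merged into one kernel-verified Lean document; each statement's English description precedes it below -/
import Mathlib

section
/- Let $F$ be a finite field, $f \in F[X]$ a polynomial whose largest square-free divisor has degree $D$, and $\mathcal{W}$ a finite subset of $F$. Let $\mathcal{B}$ be the set of pairs $(w_1, w_2) \in \mathcal{W}^2$ such that $f(X + w_1)$ and $f(X + w_2)$ share roots (in an algebraic closure) that are conjugate over a fixed subfield $K$ of $F$ with $[F : K] = 2$. Then $\#\mathcal{B} \le 2 D^2 \cdot \#\mathcal{W}$. -/
open Polynomial

lemma aux_root {F : Type} [Field F] {f g : F[X]} (hf : f ≠ 0)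
    (hdvd : ∀ p : F[X], Irreducible p → p ∣ f → p ∣ g)
    {L : Type} [Field L] (ψ : F →+* L) (r : L) (hr : eval₂ ψ r f = 0) :
    eval₂ ψ r g = 0 := by
  letI : Algebra F L := ψ.toAlgebra
  have haev : Polynomial.aeval r f = 0 := hr
  have hint : IsIntegral F r := IsAlgebraic.isIntegral ⟨f, hf, haev⟩
  have hp : Irreducible (minpoly F r) := minpoly.irreducible hint
  have hpf : minpoly F r ∣ f := minpoly.dvd F r haev
  obtain ⟨c, hc⟩ := hdvd _ hp hpf
  show Polynomial.aeval r g = 0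
  rw [hc, map_mul, minpoly.aeval, zero_mul]

/-- Let `F` be a finite field, `K` a subfield with `[F : K] = 2`, `f ∈ F[X]` a nonzero
polynomial whose largest square-free divisor (radical) has degree `D`, and `W ⊆ F` finite.
The set `B` of pairs `(w₁, w₂) ∈ W²` such that `f(X + w₁)` and `f(X + w₂)` have roots
(in an algebraic closure) that are conjugate over `K` satisfies `#B ≤ 2 D² #W`.
Here `x` and `y` are conjugate over `K` iff some ring automorphism of the algebraic
closure fixing `K` pointwise sends `x` to `y`. -/
theorem card_bad_pairs_le
    (F : Type) [Field F] [Fintype F]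
    (K : Subfield F) (hK : Module.finrank K F = 2)
    (f : F[X]) (hf : f ≠ 0) (D : ℕ)
    (hD : ∃ g : F[X], Squarefree g ∧ g ∣ f ∧ g.natDegree = D ∧
      ∀ h : F[X], Squarefree h → h ∣ f → h.natDegree ≤ D)
    (W : Finset F) :
    ({q : F × F | q.1 ∈ W ∧ q.2 ∈ W ∧
        ∃ x y : AlgebraicClosure F,
          Polynomial.aeval x (f.comp (X + C q.1)) = 0 ∧
          Polynomial.aeval y (f.comp (X + C q.2)) = 0 ∧
          ∃ σ : AlgebraicClosure F ≃+* AlgebraicClosure F,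
            (∀ a : F, a ∈ K →
              σ (algebraMap F (AlgebraicClosure F) a) = algebraMap F (AlgebraicClosure F) a) ∧
            σ x = y}).ncard ≤ 2 * D ^ 2 * W.card := by
  classical
  obtain ⟨g, hg_sf, hgf, hgD, hmax⟩ := hD
  set Ω := AlgebraicClosure F with hΩ
  let ι : F →+* Ω := algebraMap F Ω
  have hι : Function.Injective ι := ι.injective
  have hg0 : g ≠ 0 := hg_sf.ne_zero
  -- every irreducible factor of f divides g
  have hdvd : ∀ p : F[X], Irreducible p → p ∣ f → p ∣ g := by
    intro p hp hpf
    by_contra hpg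
    have hcop : IsRelPrime p g := hp.isRelPrime_iff_not_dvd.mpr hpg
    have hsq : Squarefree (p * g) := squarefree_mul_iff.mpr ⟨hcop, hp.squarefree, hg_sf⟩
    have hdv : p * g ∣ f := hcop.mul_dvd hpf hgf
    have h1 := hmax (p * g) hsq hdv
    rw [natDegree_mul hp.ne_zero hg0, hgD] at h1
    have h2 := hp.natDegree_pos
    omega
  -- root count bound
  have hcard : ∀ ψ : F →+* Ω, ((f.map ψ).roots.toFinset).card ≤ D := by
    intro ψ
    have hgm0 : g.map ψ ≠ 0 := (Polynomial.map_ne_zero_iff ψ.injective).mpr hg0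
    have hsub : (f.map ψ).roots.toFinset ⊆ (g.map ψ).roots.toFinset := by
      intro r hr
      rw [Multiset.mem_toFinset, mem_roots'] at hr ⊢
      refine ⟨hgm0, ?_⟩
      show eval r (g.map ψ) = 0
      rw [eval_map]
      refine aux_root hf hdvd ψ r ?_
      rw [← eval_map]
      exact hr.2
    calc ((f.map ψ).roots.toFinset).card ≤ ((g.map ψ).roots.toFinset).card :=
          Finset.card_le_card hsub
      _ ≤ (g.map ψ).roots.card := Multiset.toFinset_card_le _
      _ ≤ (g.map ψ).natDegree := (g.map ψ).card_roots'
      _ ≤ g.natDegree := natDegree_map_le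
      _ = D := hgD
  -- algebra setup
  have hcard2 : Fintype.card (F →ₐ[K] Ω) = 2 := by
    rw [AlgHom.card]; exact hK
  -- the finset of possible values of ι w₂
  let R : Finset Ω := (f.map ι).roots.toFinset
  let T : F → Finset Ω := fun w₁ =>
    Finset.univ.biUnion (fun ψ : F →ₐ[K] Ω =>
      R.biUnion (fun s => ((f.map (ψ : F →+* Ω)).roots.toFinset).image
        (fun t => s - t + ψ w₁)))
  have hT : ∀ w₁ : F, (T w₁).card ≤ 2 * D ^ 2 := by
    intro w₁
    calc (T w₁).card ≤ ∑ ψ : F →ₐ[K] Ω, (R.biUnion (fun s =>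
          ((f.map (ψ : F →+* Ω)).roots.toFinset).image (fun t => s - t + ψ w₁))).card :=
        Finset.card_biUnion_le
      _ ≤ ∑ _ψ : F →ₐ[K] Ω, D * D := by
          refine Finset.sum_le_sum fun ψ _ => ?_
          calc (R.biUnion (fun s =>
                ((f.map (ψ : F →+* Ω)).roots.toFinset).image (fun t => s - t + ψ w₁))).card
              ≤ ∑ s ∈ R, (((f.map (ψ : F →+* Ω)).roots.toFinset).image
                  (fun t => s - t + ψ w₁)).card := Finset.card_biUnion_le
            _ ≤ ∑ _s ∈ R, D := Finset.sum_le_sum fun s _ =>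
                (Finset.card_image_le).trans (hcard _)
            _ = R.card * D := by rw [Finset.sum_const, smul_eq_mul]
            _ ≤ D * D := Nat.mul_le_mul_right _ (hcard ι)
      _ = Fintype.card (F →ₐ[K] Ω) * (D * D) := by
          rw [Finset.sum_const, smul_eq_mul, Finset.card_univ]
      _ = 2 * D ^ 2 := by rw [hcard2]; ring
  -- membership: every bad pair satisfies ι w₂ ∈ T w₁
  have hmem : ∀ w₁ w₂ : F, (∃ x y : Ω,
      Polynomial.aeval x (f.comp (X + C w₁)) = 0 ∧
      Polynomial.aeval y (f.comp (X + C w₂)) = 0 ∧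
      ∃ σ : Ω ≃+* Ω, (∀ a : F, a ∈ K → σ (ι a) = ι a) ∧ σ x = y) →
      ι w₂ ∈ T w₁ := by
    intro w₁ w₂ ⟨x, y, hx, hy, σ, hσK, hσxy⟩
    rw [aeval_comp] at hx hy
    simp only [map_add, aeval_X, aeval_C] at hx hy
    have hcomm : ∀ k : K, (σ : Ω →+* Ω).comp ι ((algebraMap K F) k) = algebraMap K Ω k := by
      intro k
      exact hσK (k : F) k.2
    let ψ : F →ₐ[K] Ω := { toRingHom := (σ : Ω →+* Ω).comp ι, commutes' := hcomm }
    have hfm0 : f.map ι ≠ 0 := (Polynomial.map_ne_zero_iff hι).mpr hf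
    have hs : y + ι w₂ ∈ R := by
      rw [Multiset.mem_toFinset, mem_roots']
      refine ⟨hfm0, ?_⟩
      show eval (y + ι w₂) (f.map ι) = 0
      rw [eval_map]
      exact hy
    have ht : σ (x + ι w₁) ∈ (f.map (ψ : F →+* Ω)).roots.toFinset := by
      rw [Multiset.mem_toFinset, mem_roots']
      constructor
      · exact (Polynomial.map_ne_zero_iff (ψ : F →+* Ω).injective).mpr hf
      · show eval (σ (x + ι w₁)) (f.map (ψ : F →+* Ω)) = 0
        rw [eval_map]
        show eval₂ ((σ : Ω →+* Ω).comp ι) ((σ : Ω →+* Ω) (x + ι w₁)) f = 0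
        rw [← Polynomial.hom_eval₂]
        have hx0 : eval₂ ι (x + ι w₁) f = 0 := hx
        rw [hx0, map_zero]
    refine Finset.mem_biUnion.mpr ⟨ψ, Finset.mem_univ _, Finset.mem_biUnion.mpr
      ⟨y + ι w₂, hs, Finset.mem_image.mpr ⟨σ (x + ι w₁), ht, ?_⟩⟩⟩
    show (y + ι w₂) - σ (x + ι w₁) + σ (ι w₁) = ι w₂
    rw [map_add, hσxy]
    ring
  -- final counting
  let S : Finset (F × F) := W.biUnion (fun w₁ =>
    (W.filter fun w₂ => ι w₂ ∈ T w₁).image (fun w₂ => (w₁, w₂)))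
  have hsub : {q : F × F | q.1 ∈ W ∧ q.2 ∈ W ∧
      ∃ x y : Ω,
        Polynomial.aeval x (f.comp (X + C q.1)) = 0 ∧
        Polynomial.aeval y (f.comp (X + C q.2)) = 0 ∧
        ∃ σ : Ω ≃+* Ω,
          (∀ a : F, a ∈ K → σ (ι a) = ι a) ∧ σ x = y} ⊆ ↑S := by
    rintro ⟨w₁, w₂⟩ ⟨h1, h2, hbad⟩
    have := hmem w₁ w₂ hbad
    exact Finset.mem_coe.mpr (Finset.mem_biUnion.mpr ⟨w₁, h1,
      Finset.mem_image.mpr ⟨w₂, Finset.mem_filter.mpr ⟨h2, this⟩, rfl⟩⟩)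
  calc _ ≤ (↑S : Set (F × F)).ncard := Set.ncard_le_ncard hsub S.finite_toSet
    _ = S.card := Set.ncard_coe_finset S
    _ ≤ ∑ w₁ ∈ W, ((W.filter fun w₂ => ι w₂ ∈ T w₁).image (fun w₂ => (w₁, w₂))).card :=
        Finset.card_biUnion_le
    _ ≤ ∑ w₁ ∈ W, 2 * D ^ 2 := by
        refine Finset.sum_le_sum fun w₁ _ => ?_
        calc ((W.filter fun w₂ => ι w₂ ∈ T w₁).image (fun w₂ => (w₁, w₂))).card
            ≤ (W.filter fun w₂ => ι w₂ ∈ T w₁).card := Finset.card_image_le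
          _ ≤ (T w₁).card := Finset.card_le_card_of_injOn (fun w₂ => ι w₂)
              (fun w₂ hw => (Finset.mem_filter.mp hw).2) (hι.injOn)
          _ ≤ 2 * D ^ 2 := hT w₁
    _ = 2 * D ^ 2 * W.card := by rw [Finset.sum_const, smul_eq_mul, mul_comm]
end

section
/- For every integer $t \ge 3$, the number of square-free divisors of $t-1$ satisfies $W(t-1) < t^{0.96/\log\log t}$. -/
open Finset

namespace SqfB

/-- table of the first 29 primes (1-indexed); 1 elsewhere. -/
def P : ℕ → ℕ
| 1 => 2 | 2 => 3 | 3 => 5 | 4 => 7 | 5 => 11 | 6 => 13 | 7 => 17 | 8 => 19 | 9 => 23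
| 10 => 29 | 11 => 31 | 12 => 37 | 13 => 41 | 14 => 43 | 15 => 47 | 16 => 53 | 17 => 59
| 18 => 61 | 19 => 67 | 20 => 71 | 21 => 73 | 22 => 79 | 23 => 83 | 24 => 89 | 25 => 97
| 26 => 101 | 27 => 103 | 28 => 107 | 29 => 109 | _ => 1

def Q : ℕ → ℕ
| 0 => 1
| (k+1) => Q k * P (k+1)

lemma P_pos (k : ℕ) : 0 < P k := by
  simp only [P.eq_def]; split <;> norm_num

lemma Q_pos (k : ℕ) : 0 < Q k := by
  induction k with
  | zero => decide
  | succ k ih => exact Nat.mul_pos ih (P_pos (k+1))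

/-- count of integers `< n` coprime to 30 -/
def D (n : ℕ) : ℕ := ((Finset.range n).filter (fun m => Nat.Coprime m 30)).card

lemma D_succ (n : ℕ) : D (n+1) = D n + (if Nat.Coprime n 30 then 1 else 0) := by
  unfold D
  rw [Finset.range_add_one, Finset.filter_insert]
  split
  · rw [Finset.card_insert_of_notMem (by simp)]
  · simp

lemma D_period (n : ℕ) : D (n + 30) = D n + 8 := by
  induction n with
  | zero => decide
  | succ n ih =>
    have e1 : D (n + 1 + 30) = D (n + 30) + (if Nat.Coprime (n+30) 30 then 1 else 0) := by
      rw [show n + 1 + 30 = (n + 30) + 1 by ring, D_succ]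
    have e2 : D (n + 1) = D n + (if Nat.Coprime n 30 then 1 else 0) := D_succ n
    have h2 : Nat.Coprime (n+30) 30 ↔ Nat.Coprime n 30 := by
      simpa using Nat.coprime_add_mul_right_left n 30 1
    by_cases h : Nat.Coprime n 30
    · rw [e1, e2, if_pos h, if_pos (h2.2 h), ih]
    · rw [e1, e2, if_neg h, if_neg (fun hh => h (h2.1 hh)), ih]

lemma D_bound (n : ℕ) : 30 * D n ≤ 8 * n + 20 := by
  induction n using Nat.strong_induction_on with
  | _ n ih =>
    rcases lt_or_ge n 30 with h | h
    · interval_cases n <;> decide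
    · obtain ⟨m, rfl⟩ : ∃ m, n = m + 30 := ⟨n - 30, by omega⟩
      rw [D_period]
      have := ih m (by omega)
      omega

lemma wheel {s : Finset ℕ} (hp : ∀ p ∈ s, Nat.Prime p) {M : ℕ} (hM1 : 1 ≤ M)
    (hM : ∀ p ∈ s, p ≤ M) : 30 * s.card ≤ 8 * M + 88 := by
  classical
  set T := (Finset.range (M+1)).filter (fun m => 7 ≤ m ∧ Nat.Coprime m 30) with hT
  have hsub : s ⊆ insert 2 (insert 3 (insert 5 T)) := by
    intro p hps
    have hp' := hp p hps
    by_cases h2 : p = 2; · simp [h2]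
    by_cases h3 : p = 3; · simp [h3]
    by_cases h5 : p = 5; · simp [h5]
    have hcop : Nat.Coprime p 30 := by
      rw [Nat.Prime.coprime_iff_not_dvd hp']
      intro hdvd
      have hle30 : p ≤ 30 := Nat.le_of_dvd (by norm_num) hdvd
      have h2le := hp'.two_le
      interval_cases p <;>
        first
          | exact h2 rfl
          | exact h3 rfl
          | exact h5 rfl
          | exact absurd hp' (by decide)
          | (revert hdvd; decide)
    have h7 : 7 ≤ p := by
      by_contra hlt
      push_neg at hlt
      have h2le := hp'.two_le
      interval_cases p
      · exact h2 rfl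
      · exact h3 rfl
      · exact absurd hp' (by decide)
      · exact h5 rfl
      · exact absurd hp' (by decide)
    simp only [Finset.mem_insert]
    right; right; right
    rw [hT, Finset.mem_filter, Finset.mem_range]
    exact ⟨by have := hM p hps; omega, h7, hcop⟩
  have hcs : s.card ≤ 3 + T.card := by
    have c0 := Finset.card_le_card hsub
    have c1 := Finset.card_insert_le 2 (insert 3 (insert 5 T))
    have c2 := Finset.card_insert_le 3 (insert 5 T)
    have c3 := Finset.card_insert_le 5 T
    omega
  have hTD : T.card + 1 ≤ D (M+1) := by
    have h1T : 1 ∉ T := by simp [hT]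
    have hsub2 : insert 1 T ⊆ (Finset.range (M+1)).filter (fun m => Nat.Coprime m 30) := by
      intro x hx
      rcases Finset.mem_insert.1 hx with rfl | hx
      · simp [Finset.mem_filter, Finset.mem_range]; omega
      · rw [hT, Finset.mem_filter] at hx
        exact Finset.mem_filter.2 ⟨hx.1, hx.2.2⟩
    have := Finset.card_le_card hsub2
    rw [Finset.card_insert_of_notMem h1T] at this
    exact this
  have := D_bound (M+1)
  omega
noncomputable def B : ℕ → ℝ := fun k =>
  if k ≤ 29 then Real.log (Q k) else (k : ℝ) * (Real.log k + 1/10)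

lemma exp_bound_31 : Real.log (31/10 : ℝ) ≥ 11/10 := by
  rw [ge_iff_le, Real.le_log_iff_exp_le (by norm_num)]
  have h5 : Real.exp (11/10 : ℝ) ^ (10:ℕ) = Real.exp 1 ^ (11:ℕ) := by
    rw [← Real.exp_nat_mul, ← Real.exp_nat_mul]; norm_num
  have he := Real.exp_one_lt_d9
  have hp : Real.exp (11/10 : ℝ) ^ (10:ℕ) ≤ (31/10 : ℝ) ^ (10:ℕ) := by
    rw [h5]
    calc Real.exp 1 ^ (11:ℕ) ≤ (2.7182818286 : ℝ) ^ (11:ℕ) := by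
          apply pow_le_pow_left₀ (le_of_lt (Real.exp_pos 1)) (le_of_lt he)
      _ ≤ (31/10 : ℝ) ^ (10:ℕ) := by norm_num
  exact le_of_pow_le_pow_left₀ (by norm_num) (by norm_num) hp

lemma log_30_ge : Real.log (30 : ℝ) ≥ 17/5 := by
  rw [ge_iff_le, Real.le_log_iff_exp_le (by norm_num)]
  have h5 : Real.exp (17/5 : ℝ) ^ (5:ℕ) = Real.exp 1 ^ (17:ℕ) := by
    rw [← Real.exp_nat_mul, ← Real.exp_nat_mul]; norm_num
  have he := Real.exp_one_lt_d9
  have hp : Real.exp (17/5 : ℝ) ^ (5:ℕ) ≤ (30 : ℝ) ^ (5:ℕ) := by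
    rw [h5]
    calc Real.exp 1 ^ (17:ℕ) ≤ (2.7182818286 : ℝ) ^ (17:ℕ) := by
          apply pow_le_pow_left₀ (le_of_lt (Real.exp_pos 1)) (le_of_lt he)
      _ ≤ (30 : ℝ) ^ (5:ℕ) := by norm_num
  exact le_of_pow_le_pow_left₀ (by norm_num) (by norm_num) hp

lemma le_log_of_pow_le {r : ℝ} {a m : ℕ} (hm : 0 < m) (hr : 0 < r) (h : (2:ℝ)^a ≤ r^m) :
    (a:ℝ)/m * Real.log 2 ≤ Real.log r := by
  have h1 : Real.log ((2:ℝ)^a) ≤ Real.log (r^m) := Real.log_le_log (by positivity) h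
  rw [Real.log_pow, Real.log_pow] at h1
  rw [div_mul_eq_mul_div, div_le_iff₀ (by exact_mod_cast hm)]
  linarith

lemma log_le_of_pow_le {r : ℝ} {d m : ℕ} (hm : 0 < m) (hr : 0 < r) (h : r^m ≤ (2:ℝ)^d) :
    Real.log r ≤ (d:ℝ)/m * Real.log 2 := by
  have h1 : Real.log (r^m) ≤ Real.log ((2:ℝ)^d) := Real.log_le_log (by positivity) h
  rw [Real.log_pow, Real.log_pow] at h1
  rw [div_mul_eq_mul_div, le_div_iff₀ (by exact_mod_cast hm)]
  linarith

lemma logQ29_ge : (151192 : ℝ)/1024 * Real.log 2 ≤ Real.log (Q 29) := by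
  apply le_log_of_pow_le (by norm_num) (by exact_mod_cast Q_pos 29)
  have h : (2:ℕ)^151192 ≤ Q 29 ^ 1024 := by decide +kernel
  exact_mod_cast h

lemma log30_le : Real.log (30:ℝ) ≤ (5025 : ℝ)/1024 * Real.log 2 := by
  apply log_le_of_pow_le (by norm_num) (by norm_num)
  have h : (30:ℕ)^1024 ≤ 2^5025 := by decide +kernel
  exact_mod_cast h

lemma master : ∀ (n : ℕ) (s : Finset ℕ), s.card = n → (∀ p ∈ s, Nat.Prime p) →
    B n ≤ Real.log (∏ p ∈ s, (p : ℝ)) := by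
  intro n
  induction n using Nat.strong_induction_on with
  | _ n ih =>
  intro s hcard hp
  match n, hcard with
  | 0, hcard =>
    rw [Finset.card_eq_zero.1 hcard]
    simp [B, Q]
  | (m+1), hcard =>
    have hne : s.Nonempty := Finset.card_pos.1 (by omega)
    set M := s.max' hne with hM
    have hMs : M ∈ s := s.max'_mem hne
    have hPM : Nat.Prime M := hp M hMs
    have hle : ∀ p ∈ s, p ≤ M := fun p hps => s.le_max' p hps
    have hM2 : 2 ≤ M := hPM.two_le
    -- positivity of factors
    have hpos : ∀ p ∈ s, (0:ℝ) < (p:ℝ) := fun p hps => by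
      exact_mod_cast (hp p hps).pos
    have hprod : ∏ p ∈ s, (p:ℝ) = (M:ℝ) * ∏ p ∈ s.erase M, (p:ℝ) :=
      (Finset.mul_prod_erase s _ hMs).symm
    have herase_pos : (0:ℝ) < ∏ p ∈ s.erase M, (p:ℝ) :=
      Finset.prod_pos (fun p hps => hpos p (Finset.mem_of_mem_erase hps))
    have hlog : Real.log (∏ p ∈ s, (p:ℝ)) = Real.log M + Real.log (∏ p ∈ s.erase M, (p:ℝ)) := by
      rw [hprod, Real.log_mul (by positivity) (ne_of_gt herase_pos)]
    have hcard' : (s.erase M).card = m := by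
      rw [Finset.card_erase_of_mem hMs, hcard]
      omega
    have hIH : B m ≤ Real.log (∏ p ∈ s.erase M, (p:ℝ)) :=
      ih m (by omega) _ hcard' (fun p hps => hp p (Finset.mem_of_mem_erase hps))
    rw [hlog]
    have hstep : B (m+1) ≤ Real.log M + B m := by
      rcases le_or_gt (m+1) 29 with h29 | h29
      · -- small case: M ≥ P (m+1)
        have hM_ge : P (m+1) ≤ M := by
          by_contra hlt
          push_neg at hlt
          have hsub : s ⊆ (Finset.range (P (m+1))).filter Nat.Prime := by
            intro p hps
            rw [Finset.mem_filter, Finset.mem_range]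
            exact ⟨lt_of_le_of_lt (hle p hps) hlt, hp p hps⟩
          have hcard2 : m + 1 ≤ ((Finset.range (P (m+1))).filter Nat.Prime).card := by
            have := Finset.card_le_card hsub
            omega
          have hub : m ≤ 28 := by omega
          interval_cases m <;> exact absurd hcard2 (by decide +kernel)
        have hQm : (0:ℝ) < (Q m : ℝ) := by exact_mod_cast Q_pos m
        have hPm : (0:ℝ) < (P (m+1) : ℝ) := by exact_mod_cast P_pos (m+1)
        have hBm1 : B (m+1) = Real.log (Q m) + Real.log (P (m+1)) := by
          rw [B, if_pos h29, show Q (m+1) = Q m * P (m+1) from rfl]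
          push_cast
          rw [Real.log_mul (ne_of_gt hQm) (ne_of_gt hPm)]
        rw [hBm1, B, if_pos (by omega : m ≤ 29)]
        have : Real.log (P (m+1)) ≤ Real.log M :=
          Real.log_le_log hPm (by exact_mod_cast hM_ge)
        linarith
      · -- wheel bound for M
        have hwheel : 30 * (m+1) ≤ 8 * M + 88 := by
          rw [← hcard]; exact wheel hp (by omega) hle
        rcases Nat.lt_or_ge m 30 with h30 | h31
        · -- m+1 = 30
          have hm30 : m = 29 := by omega
          subst hm30
          have hM102 : (102 : ℕ) ≤ M := by omega
          have h64 : (64:ℝ) ≤ (M:ℝ) := by exact_mod_cast (by omega : (64:ℕ) ≤ M)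
          have hlogM : (6:ℝ) * Real.log 2 ≤ Real.log M := by
            calc (6:ℝ) * Real.log 2 = Real.log ((64:ℝ)) := by
                  rw [show (64:ℝ) = 2^(6:ℕ) by norm_num, Real.log_pow]; norm_num
              _ ≤ Real.log M := Real.log_le_log (by norm_num) h64
          have hB30 : B 30 = 30 * (Real.log 30 + 1/10) := by
            rw [B, if_neg (by norm_num)]; norm_num
          have hB29 : B 29 = Real.log (Q 29) := by rw [B, if_pos (by norm_num)]
          rw [hB30, hB29]
          have h1 := logQ29_ge
          have h2 := log30_le
          have hl2 := Real.log_two_gt_d9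
          set lq := Real.log ((Q 29 : ℕ) : ℝ) with hlq
          linarith
        · -- m+1 ≥ 31
          have hK : (31 : ℝ) ≤ ((m:ℝ)+1) := by exact_mod_cast by omega
          have hMr : ((m:ℝ)+1) * (31/10) ≤ (M:ℝ) := by
            have h8M : (30:ℝ) * ((m:ℝ)+1) ≤ 8 * (M:ℝ) + 88 := by exact_mod_cast hwheel
            nlinarith
          have hm0 : (0:ℝ) < (m:ℝ) := by exact_mod_cast by omega
          have hBm1 : B (m+1) = ((m:ℝ)+1) * (Real.log ((m:ℝ)+1) + 1/10) := by
            rw [B, if_neg (by omega)]; push_cast; ring_nf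
          have hBm : B m = (m:ℝ) * (Real.log (m:ℝ) + 1/10) := by
            rw [B, if_neg (by omega)]
          rw [hBm1, hBm]
          -- log (m+1) - log m ≤ 1/m
          have hlogdiff : Real.log ((m:ℝ)+1) - Real.log (m:ℝ) ≤ 1/(m:ℝ) := by
            have hq : (0:ℝ) < ((m:ℝ)+1)/(m:ℝ) := by positivity
            have := Real.log_le_sub_one_of_pos hq
            rw [Real.log_div (by positivity) (ne_of_gt hm0)] at this
            have hx : ((m:ℝ)+1)/(m:ℝ) - 1 = 1/(m:ℝ) := by field_simp; ring
            linarith [hx ▸ this]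
          -- log M ≥ log (m+1) + 11/10
          have hlogM : Real.log ((m:ℝ)+1) + 11/10 ≤ Real.log M := by
            have h1 : Real.log (((m:ℝ)+1) * (31/10)) ≤ Real.log M := by
              apply Real.log_le_log (by positivity) hMr
            rw [Real.log_mul (by positivity) (by norm_num)] at h1
            have := exp_bound_31
            linarith
          have hml : (m:ℝ) * (Real.log ((m:ℝ)+1) - Real.log (m:ℝ)) ≤ 1 := by
            have := mul_le_mul_of_nonneg_left hlogdiff (le_of_lt hm0)
            calc (m:ℝ) * (Real.log ((m:ℝ)+1) - Real.log (m:ℝ)) ≤ (m:ℝ) * (1/(m:ℝ)) := this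
              _ = 1 := by field_simp
          nlinarith [hml, hlogM]
    linarith
lemma trans_lemma {c l L : ℝ} (hc : 0 < c) (h1 : 25/24 * c ≤ l) (h2 : l ≤ L)
    (h3 : c * Real.log l < 0.96 * l) : c * Real.log L < 0.96 * L := by
  have hl : 0 < l := lt_of_lt_of_le (by linarith) h1
  have hL : 0 < L := lt_of_lt_of_le hl h2
  have hlog : Real.log L ≤ Real.log l + (L - l)/l := by
    have hq : (0:ℝ) < L/l := by positivity
    have := Real.log_le_sub_one_of_pos hq
    rw [Real.log_div (ne_of_gt hL) (ne_of_gt hl)] at this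
    have hx : L/l - 1 = (L - l)/l := by field_simp
    linarith [hx ▸ this]
  have h4 : c * ((L - l)/l) ≤ 0.96 * (L - l) := by
    have hcl : c/l ≤ 24/25 := by
      rw [div_le_iff₀ hl]; linarith
    have hLl : (0:ℝ) ≤ L - l := by linarith
    calc c * ((L - l)/l) = (c/l) * (L - l) := by ring
      _ ≤ (24/25) * (L - l) := mul_le_mul_of_nonneg_right hcl hLl
      _ ≤ 0.96 * (L - l) := by linarith
  calc c * Real.log L ≤ c * (Real.log l + (L - l)/l) :=
        mul_le_mul_of_nonneg_left hlog (le_of_lt hc)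
    _ = c * Real.log l + c * ((L - l)/l) := by ring
    _ < 0.96 * l + 0.96 * (L - l) := by linarith
    _ = 0.96 * L := by ring

lemma core_lemma {k a d : ℕ} (hk : 0 < k)
    (hA : (2:ℕ)^a ≤ Q k ^ 1024)
    (hB : (((a:ℝ))/1024 * 0.6931471808)^(1024:ℕ) ≤ 2^d)
    (hC : 25 * 1024 * k ≤ 24 * a)
    (hD : (k:ℝ) * d * 0.6931471808^2 < 0.96 * a * 0.6931471803)
    {L : ℝ} (hQL : Real.log ((Q k : ℕ) : ℝ) ≤ L) :
    (k:ℝ) * Real.log 2 * Real.log L < 0.96 * L := by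
  have l2a := Real.log_two_gt_d9
  have l2b := Real.log_two_lt_d9
  have hl2 : (0:ℝ) < Real.log 2 := by linarith
  have ha0 : 0 < a := by omega
  set l : ℝ := (a:ℝ)/1024 * Real.log 2 with hl
  have ha0' : (0:ℝ) < (a:ℝ) := by exact_mod_cast ha0
  have hl0 : 0 < l := by positivity
  have hlQ : l ≤ Real.log ((Q k : ℕ) : ℝ) := by
    apply le_log_of_pow_le (by norm_num) (by exact_mod_cast Q_pos k)
    exact_mod_cast hA
  have hcore : ((k:ℝ) * Real.log 2) * Real.log l < 0.96 * l := by
    have h1 : Real.log l ≤ Real.log ((a:ℝ)/1024 * 0.6931471808) := by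
      apply Real.log_le_log hl0
      have : (a:ℝ)/1024 * Real.log 2 ≤ (a:ℝ)/1024 * 0.6931471808 :=
        mul_le_mul_of_nonneg_left (le_of_lt l2b) (by positivity)
      linarith
    have h2 : Real.log ((a:ℝ)/1024 * 0.6931471808) ≤ (d:ℝ)/1024 * Real.log 2 :=
      log_le_of_pow_le (by norm_num) (by positivity) hB
    have hkd : ((k:ℝ) * Real.log 2) * Real.log l ≤ (k:ℝ) * (d:ℝ)/1024 * (Real.log 2 * Real.log 2) := by
      calc ((k:ℝ) * Real.log 2) * Real.log l ≤ ((k:ℝ) * Real.log 2) * ((d:ℝ)/1024 * Real.log 2) := by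
            apply mul_le_mul_of_nonneg_left (le_trans h1 h2) (by positivity)
        _ = (k:ℝ) * (d:ℝ)/1024 * (Real.log 2 * Real.log 2) := by ring
    have hsq : Real.log 2 * Real.log 2 ≤ 0.6931471808 * 0.6931471808 := by nlinarith
    have hrhs : 0.96 * ((a:ℝ)/1024 * 0.6931471803) ≤ 0.96 * l := by
      have : (a:ℝ)/1024 * 0.6931471803 ≤ (a:ℝ)/1024 * Real.log 2 :=
        mul_le_mul_of_nonneg_left (le_of_lt l2a) (by positivity)
      linarith
    have hk0 : (0:ℝ) < (k:ℝ) := by exact_mod_cast hk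
    have hd0 : (0:ℝ) ≤ (k:ℝ) * (d:ℝ)/1024 := by positivity
    calc ((k:ℝ) * Real.log 2) * Real.log l ≤ (k:ℝ) * (d:ℝ)/1024 * (Real.log 2 * Real.log 2) := hkd
      _ ≤ (k:ℝ) * (d:ℝ)/1024 * (0.6931471808 * 0.6931471808) := mul_le_mul_of_nonneg_left hsq hd0
      _ < 0.96 * ((a:ℝ)/1024 * 0.6931471803) := by nlinarith [hD]
      _ ≤ 0.96 * l := hrhs
  have hcond : 25/24 * ((k:ℝ) * Real.log 2) ≤ l := by
    have hCr : (25:ℝ) * 1024 * (k:ℝ) ≤ 24 * (a:ℝ) := by exact_mod_cast hC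
    rw [hl]
    have hfac : (0:ℝ) ≤ (24 * (a:ℝ) - 25 * 1024 * (k:ℝ)) * Real.log 2 :=
      mul_nonneg (by linarith) (le_of_lt hl2)
    nlinarith [hfac]
  exact trans_lemma (by positivity) hcond (le_trans hlQ hQL) hcore

lemma tail_core {s : ℝ} (hs : 17/5 ≤ s) :
    Real.log 2 * (s + Real.log (s + 1/10)) < 0.96 * (s + 1/10) := by
  have l2a := Real.log_two_gt_d9
  have l2b := Real.log_two_lt_d9
  have hl2 : (0:ℝ) < Real.log 2 := by linarith
  have h1 : Real.log (s + 1/10) ≤ Real.log (7/2) + (s - 17/5)/(7/2) := by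
    have hq : (0:ℝ) < (s + 1/10)/(7/2) := by positivity
    have := Real.log_le_sub_one_of_pos hq
    rw [Real.log_div (by linarith) (by norm_num)] at this
    have hx : (s + 1/10)/(7/2) - 1 = (s - 17/5)/(7/2) := by ring
    linarith [hx ▸ this]
  have h2 : Real.log (7/2 : ℝ) ≤ 2 * Real.log 2 := by
    have ha : Real.log (7/2 : ℝ) ≤ Real.log 4 := Real.log_le_log (by norm_num) (by norm_num)
    have hb : Real.log (4:ℝ) = 2 * Real.log 2 := by
      rw [show (4:ℝ) = 2^(2:ℕ) by norm_num, Real.log_pow]; norm_num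
    linarith
  -- log2 * (s + log(s+0.1)) ≤ log2 * s + log2 * (2 log2 + (s-3.4)/3.5)
  have h3 : Real.log 2 * Real.log (s + 1/10) ≤
      Real.log 2 * (2 * Real.log 2) + Real.log 2 * ((s - 17/5)/(7/2)) := by
    have := mul_le_mul_of_nonneg_left h1 (le_of_lt hl2)
    nlinarith [this]
  have hsub : (0:ℝ) ≤ s - 17/5 := by linarith
  have h4 : Real.log 2 * ((s - 17/5)/(7/2)) ≤ 0.6931471808 * ((s - 17/5)/(7/2)) := by
    apply mul_le_mul_of_nonneg_right (le_of_lt l2b) (by positivity)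
  have h5 : Real.log 2 * (2 * Real.log 2) ≤ 0.6931471808 * (2 * 0.6931471808) := by nlinarith
  have h6 : Real.log 2 * s ≤ 0.6931471808 * s := by
    apply mul_le_mul_of_nonneg_right (le_of_lt l2b) (by linarith)
  have hexp : Real.log 2 * (s + Real.log (s + 1/10)) =
      Real.log 2 * s + Real.log 2 * Real.log (s + 1/10) := by ring
  rw [hexp]
  linarith

lemma smallk_lemma {L : ℝ} (hL : 1 < L) {k : ℕ} (hk : k ≤ 3) :
    (k:ℝ) * Real.log 2 * Real.log L < 0.96 * L := by
  have l2b := Real.log_two_lt_d9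
  have l2a := Real.log_two_gt_d9
  have hlogL : 0 < Real.log L := Real.log_pos hL
  have hL0 : (0:ℝ) < L := by linarith
  have hee := Real.exp_one_gt_d9
  have he1 : (0:ℝ) < Real.exp 1 := Real.exp_pos 1
  -- e * log L ≤ L
  have hLe : Real.log L ≤ L / Real.exp 1 := by
    have hq : (0:ℝ) < L / Real.exp 1 := by positivity
    have := Real.log_le_sub_one_of_pos hq
    rw [Real.log_div (ne_of_gt hL0) (ne_of_gt he1), Real.log_exp] at this
    linarith
  have hLe2 : (2.7182818283 : ℝ) * Real.log L ≤ L := by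
    have hm : Real.log L * Real.exp 1 ≤ L := (le_div_iff₀ he1).1 hLe
    nlinarith [mul_le_mul_of_nonneg_right (le_of_lt hee) (le_of_lt hlogL)]
  have hk3 : (k:ℝ) ≤ 3 := by exact_mod_cast hk
  have hknn : (0:ℝ) ≤ (k:ℝ) := Nat.cast_nonneg k
  have hstep : (k:ℝ) * Real.log 2 * Real.log L ≤ 3 * 0.6931471808 * Real.log L := by
    have hc1 : (k:ℝ) * Real.log 2 ≤ 3 * 0.6931471808 := by nlinarith
    exact mul_le_mul_of_nonneg_right hc1 (le_of_lt hlogL)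
  calc (k:ℝ) * Real.log 2 * Real.log L ≤ 3 * 0.6931471808 * Real.log L := hstep
    _ < 0.96 * L := by nlinarith [hLe2, hlogL]
lemma pow1024_aux {x y d : ℕ} [x.AtLeastTwo] [y.AtLeastTwo]
    (h : (OfNat.ofNat x : ℕ) ^ 1024 ≤ 2 ^ d * (OfNat.ofNat y : ℕ) ^ 1024) :
    (OfNat.ofNat x : ℝ) ^ 1024 ≤ 2 ^ d * (OfNat.ofNat y : ℝ) ^ 1024 := by
  have h2 := (Nat.cast_le (α := ℝ)).2 h
  push_cast at h2
  exact h2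
end SqfB
set_option maxHeartbeats 10000000 in
/-- For every integer `t ≥ 3`, the number `W(t-1)` of square-free divisors of `t-1`
satisfies `W(t-1) < t^{0.96/log log t}`. -/
theorem squarefree_divisor_count_bound (t : ℕ) (ht : 3 ≤ t) :
    ({d : ℕ | d ∣ t - 1 ∧ Squarefree d}.ncard : ℝ) <
      (t : ℝ) ^ ((0.96 : ℝ) / Real.log (Real.log t)) := by
  have hn0 : t - 1 ≠ 0 := by omega
  set n := t - 1 with hn
  have hset : {d : ℕ | d ∣ n ∧ Squarefree d} = ↑(n.divisors.filter Squarefree) := by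
    ext d
    simp only [Set.mem_setOf_eq, Finset.coe_filter, Nat.mem_divisors, Set.mem_setOf_eq]
    tauto
  rw [hset, Set.ncard_coe_finset]
  set k := n.primeFactors.card with hk
  have hcard : (n.divisors.filter Squarefree).card ≤ 2^k := by
    rw [hk, ← Finset.card_powerset]
    apply Finset.card_le_card_of_injOn (fun d => d.primeFactors)
    · intro d hd
      rw [Finset.mem_coe, Finset.mem_filter, Nat.mem_divisors] at hd
      exact Finset.mem_powerset.2 (Nat.primeFactors_mono hd.1.1 hn0)
    · intro d1 h1 d2 h2 heq
      rw [Finset.mem_coe, Finset.mem_filter] at h1 h2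
      rw [← Nat.prod_primeFactors_of_squarefree h1.2, ← Nat.prod_primeFactors_of_squarefree h2.2]
      exact Finset.prod_congr heq (fun _ _ => rfl)
  have ht3 : (3:ℝ) ≤ (t:ℝ) := by exact_mod_cast ht
  have ht0 : (0:ℝ) < (t:ℝ) := by linarith
  set L := Real.log (t:ℝ) with hL
  have hL1 : 1 < L := by
    have h3 : (1:ℝ) < Real.log 3 := by
      rw [Real.lt_log_iff_exp_lt (by norm_num)]
      have := Real.exp_one_lt_d9
      calc Real.exp 1 < 2.7182818286 := this
        _ < 3 := by norm_num
    have h4 : Real.log 3 ≤ L := Real.log_le_log (by norm_num) ht3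
    linarith
  have hlogL : 0 < Real.log L := Real.log_pos hL1
  have hBL : SqfB.B k ≤ L := by
    have hdvd := Nat.prod_primeFactors_dvd n
    have hlen : (∏ p ∈ n.primeFactors, p) ≤ n := Nat.le_of_dvd (Nat.pos_of_ne_zero hn0) hdvd
    have hprod : SqfB.B k ≤ Real.log (∏ p ∈ n.primeFactors, (p:ℝ)) :=
      SqfB.master k n.primeFactors rfl (fun p hp => Nat.prime_of_mem_primeFactors hp)
    have hcast : (∏ p ∈ n.primeFactors, (p:ℝ)) = ((∏ p ∈ n.primeFactors, p : ℕ) : ℝ) := by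
      push_cast; rfl
    have hpos : (0:ℝ) < ((∏ p ∈ n.primeFactors, p : ℕ) : ℝ) := by
      have : 0 < (∏ p ∈ n.primeFactors, p) := Finset.prod_pos (fun p hp => (Nat.prime_of_mem_primeFactors hp).pos)
      exact_mod_cast this
    have hle2 : Real.log (∏ p ∈ n.primeFactors, (p:ℝ)) ≤ L := by
      rw [hcast]
      apply Real.log_le_log hpos
      have h1 : ((∏ p ∈ n.primeFactors, p : ℕ) : ℝ) ≤ (n:ℝ) := by exact_mod_cast hlen
      have h2 : (n:ℝ) ≤ (t:ℝ) := by exact_mod_cast (by omega : n ≤ t)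
      linarith
    linarith
  have key : (k:ℝ) * Real.log 2 * Real.log L < 0.96 * L := by
    rcases le_or_gt k 3 with hk3 | hk4
    · exact SqfB.smallk_lemma hL1 hk3
    rcases le_or_gt k 29 with hk29 | hk30
    · rw [SqfB.B, if_pos hk29] at hBL
      interval_cases k
      · exact SqfB.core_lemma (a := 7899) (d := 2477) (by norm_num) (by norm_num [SqfB.Q, SqfB.P]; decide +kernel) (by norm_num; rw [div_pow, div_le_iff₀ (by positivity)]; exact SqfB.pow1024_aux (by decide +kernel)) (by norm_num) (by norm_num) hBL
      · exact SqfB.core_lemma (a := 11441) (d := 3025) (by norm_num) (by norm_num [SqfB.Q, SqfB.P]; decide +kernel) (by norm_num; rw [div_pow, div_le_iff₀ (by positivity)]; exact SqfB.pow1024_aux (by decide +kernel)) (by norm_num) (by norm_num) hBL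
      · exact SqfB.core_lemma (a := 15231) (d := 3447) (by norm_num) (by norm_num [SqfB.Q, SqfB.P]; decide +kernel) (by norm_num; rw [div_pow, div_le_iff₀ (by positivity)]; exact SqfB.pow1024_aux (by decide +kernel)) (by norm_num) (by norm_num) hBL
      · exact SqfB.core_lemma (a := 19416) (d := 3806) (by norm_num) (by norm_num [SqfB.Q, SqfB.P]; decide +kernel) (by norm_num; rw [div_pow, div_le_iff₀ (by positivity)]; exact SqfB.pow1024_aux (by decide +kernel)) (by norm_num) (by norm_num) hBL
      · exact SqfB.core_lemma (a := 23766) (d := 4105) (by norm_num) (by norm_num [SqfB.Q, SqfB.P]; decide +kernel) (by norm_num; rw [div_pow, div_le_iff₀ (by positivity)]; exact SqfB.pow1024_aux (by decide +kernel)) (by norm_num) (by norm_num) hBL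
      · exact SqfB.core_lemma (a := 28398) (d := 4368) (by norm_num) (by norm_num [SqfB.Q, SqfB.P]; decide +kernel) (by norm_num; rw [div_pow, div_le_iff₀ (by positivity)]; exact SqfB.pow1024_aux (by decide +kernel)) (by norm_num) (by norm_num) hBL
      · exact SqfB.core_lemma (a := 33373) (d := 4606) (by norm_num) (by norm_num [SqfB.Q, SqfB.P]; decide +kernel) (by norm_num; rw [div_pow, div_le_iff₀ (by positivity)]; exact SqfB.pow1024_aux (by decide +kernel)) (by norm_num) (by norm_num) hBL
      · exact SqfB.core_lemma (a := 38446) (d := 4815) (by norm_num) (by norm_num [SqfB.Q, SqfB.P]; decide +kernel) (by norm_num; rw [div_pow, div_le_iff₀ (by positivity)]; exact SqfB.pow1024_aux (by decide +kernel)) (by norm_num) (by norm_num) hBL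
      · exact SqfB.core_lemma (a := 43780) (d := 5007) (by norm_num) (by norm_num [SqfB.Q, SqfB.P]; decide +kernel) (by norm_num; rw [div_pow, div_le_iff₀ (by positivity)]; exact SqfB.pow1024_aux (by decide +kernel)) (by norm_num) (by norm_num) hBL
      · exact SqfB.core_lemma (a := 49266) (d := 5181) (by norm_num) (by norm_num [SqfB.Q, SqfB.P]; decide +kernel) (by norm_num; rw [div_pow, div_le_iff₀ (by positivity)]; exact SqfB.pow1024_aux (by decide +kernel)) (by norm_num) (by norm_num) hBL
      · exact SqfB.core_lemma (a := 54823) (d := 5339) (by norm_num) (by norm_num [SqfB.Q, SqfB.P]; decide +kernel) (by norm_num; rw [div_pow, div_le_iff₀ (by positivity)]; exact SqfB.pow1024_aux (by decide +kernel)) (by norm_num) (by norm_num) hBL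
      · exact SqfB.core_lemma (a := 60511) (d := 5485) (by norm_num) (by norm_num [SqfB.Q, SqfB.P]; decide +kernel) (by norm_num; rw [div_pow, div_le_iff₀ (by positivity)]; exact SqfB.pow1024_aux (by decide +kernel)) (by norm_num) (by norm_num) hBL
      · exact SqfB.core_lemma (a := 66376) (d := 5622) (by norm_num) (by norm_num [SqfB.Q, SqfB.P]; decide +kernel) (by norm_num; rw [div_pow, div_le_iff₀ (by positivity)]; exact SqfB.pow1024_aux (by decide +kernel)) (by norm_num) (by norm_num) hBL
      · exact SqfB.core_lemma (a := 72400) (d := 5750) (by norm_num) (by norm_num [SqfB.Q, SqfB.P]; decide +kernel) (by norm_num; rw [div_pow, div_le_iff₀ (by positivity)]; exact SqfB.pow1024_aux (by decide +kernel)) (by norm_num) (by norm_num) hBL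
      · exact SqfB.core_lemma (a := 78473) (d := 5869) (by norm_num) (by norm_num [SqfB.Q, SqfB.P]; decide +kernel) (by norm_num; rw [div_pow, div_le_iff₀ (by positivity)]; exact SqfB.pow1024_aux (by decide +kernel)) (by norm_num) (by norm_num) hBL
      · exact SqfB.core_lemma (a := 84685) (d := 5982) (by norm_num) (by norm_num [SqfB.Q, SqfB.P]; decide +kernel) (by norm_num; rw [div_pow, div_le_iff₀ (by positivity)]; exact SqfB.pow1024_aux (by decide +kernel)) (by norm_num) (by norm_num) hBL
      · exact SqfB.core_lemma (a := 90982) (d := 6088) (by norm_num) (by norm_num [SqfB.Q, SqfB.P]; decide +kernel) (by norm_num; rw [div_pow, div_le_iff₀ (by positivity)]; exact SqfB.pow1024_aux (by decide +kernel)) (by norm_num) (by norm_num) hBL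
      · exact SqfB.core_lemma (a := 97321) (d := 6187) (by norm_num) (by norm_num [SqfB.Q, SqfB.P]; decide +kernel) (by norm_num; rw [div_pow, div_le_iff₀ (by positivity)]; exact SqfB.pow1024_aux (by decide +kernel)) (by norm_num) (by norm_num) hBL
      · exact SqfB.core_lemma (a := 103776) (d := 6282) (by norm_num) (by norm_num [SqfB.Q, SqfB.P]; decide +kernel) (by norm_num; rw [div_pow, div_le_iff₀ (by positivity)]; exact SqfB.pow1024_aux (by decide +kernel)) (by norm_num) (by norm_num) hBL
      · exact SqfB.core_lemma (a := 110304) (d := 6372) (by norm_num) (by norm_num [SqfB.Q, SqfB.P]; decide +kernel) (by norm_num; rw [div_pow, div_le_iff₀ (by positivity)]; exact SqfB.pow1024_aux (by decide +kernel)) (by norm_num) (by norm_num) hBL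
      · exact SqfB.core_lemma (a := 116935) (d := 6458) (by norm_num) (by norm_num [SqfB.Q, SqfB.P]; decide +kernel) (by norm_num; rw [div_pow, div_le_iff₀ (by positivity)]; exact SqfB.pow1024_aux (by decide +kernel)) (by norm_num) (by norm_num) hBL
      · exact SqfB.core_lemma (a := 123693) (d := 6541) (by norm_num) (by norm_num [SqfB.Q, SqfB.P]; decide +kernel) (by norm_num; rw [div_pow, div_le_iff₀ (by positivity)]; exact SqfB.pow1024_aux (by decide +kernel)) (by norm_num) (by norm_num) hBL
      · exact SqfB.core_lemma (a := 130511) (d := 6621) (by norm_num) (by norm_num [SqfB.Q, SqfB.P]; decide +kernel) (by norm_num; rw [div_pow, div_le_iff₀ (by positivity)]; exact SqfB.pow1024_aux (by decide +kernel)) (by norm_num) (by norm_num) hBL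
      · exact SqfB.core_lemma (a := 137358) (d := 6696) (by norm_num) (by norm_num [SqfB.Q, SqfB.P]; decide +kernel) (by norm_num; rw [div_pow, div_le_iff₀ (by positivity)]; exact SqfB.pow1024_aux (by decide +kernel)) (by norm_num) (by norm_num) hBL
      · exact SqfB.core_lemma (a := 144261) (d := 6769) (by norm_num) (by norm_num [SqfB.Q, SqfB.P]; decide +kernel) (by norm_num; rw [div_pow, div_le_iff₀ (by positivity)]; exact SqfB.pow1024_aux (by decide +kernel)) (by norm_num) (by norm_num) hBL
      · exact SqfB.core_lemma (a := 151192) (d := 6838) (by norm_num) (by norm_num [SqfB.Q, SqfB.P]; decide +kernel) (by norm_num; rw [div_pow, div_le_iff₀ (by positivity)]; exact SqfB.pow1024_aux (by decide +kernel)) (by norm_num) (by norm_num) hBL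
    · rw [SqfB.B, if_neg (by omega)] at hBL
      have hk0 : (0:ℝ) < (k:ℝ) := by
        have : (0:ℕ) < k := by omega
        exact_mod_cast this
      have hs : 17/5 ≤ Real.log (k:ℝ) := by
        have h30 : Real.log (30:ℝ) ≤ Real.log (k:ℝ) :=
          Real.log_le_log (by norm_num) (by exact_mod_cast (by omega : 30 ≤ k))
        linarith [SqfB.log_30_ge]
      have hinner : 25/24 * Real.log 2 ≤ Real.log (k:ℝ) + 1/10 := by
        have := Real.log_two_lt_d9
        linarith
      have h25 : 25/24 * ((k:ℝ) * Real.log 2) ≤ (k:ℝ) * (Real.log (k:ℝ) + 1/10) := by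
        have := mul_le_mul_of_nonneg_left hinner (le_of_lt hk0)
        linarith [this]
      have hl2 : (0:ℝ) < Real.log 2 := Real.log_pos (by norm_num)
      apply SqfB.trans_lemma (by positivity) h25 hBL
      have hsplit : Real.log ((k:ℝ) * (Real.log (k:ℝ) + 1/10))
          = Real.log (k:ℝ) + Real.log (Real.log (k:ℝ) + 1/10) :=
        Real.log_mul (ne_of_gt hk0) (by linarith)
      rw [hsplit]
      have htc := SqfB.tail_core hs
      calc (k:ℝ) * Real.log 2 * (Real.log (k:ℝ) + Real.log (Real.log (k:ℝ) + 1/10))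
          = (k:ℝ) * (Real.log 2 * (Real.log (k:ℝ) + Real.log (Real.log (k:ℝ) + 1/10))) := by ring
        _ < (k:ℝ) * (0.96 * (Real.log (k:ℝ) + 1/10)) := by
            exact mul_lt_mul_of_pos_left htc hk0
        _ = 0.96 * ((k:ℝ) * (Real.log (k:ℝ) + 1/10)) := by ring
  have h2k : ((2:ℝ))^(k:ℕ) < (t:ℝ) ^ ((0.96:ℝ)/Real.log L) := by
    rw [Real.rpow_def_of_pos ht0]
    have hexp : ((2:ℝ))^(k:ℕ) = Real.exp ((k:ℝ) * Real.log 2) := by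
      rw [← Real.log_pow, Real.exp_log (by positivity)]
    rw [hexp]
    apply Real.exp_lt_exp.2
    have hdiv : (k:ℝ) * Real.log 2 < 0.96 * L / Real.log L := by
      rw [lt_div_iff₀ hlogL]; linarith [key]
    calc (k:ℝ) * Real.log 2 < 0.96 * L / Real.log L := hdiv
      _ = Real.log (t:ℝ) * (0.96 / Real.log L) := by rw [← hL]; ring
  calc ((n.divisors.filter Squarefree).card : ℝ) ≤ ((2^k : ℕ) : ℝ) := by exact_mod_cast hcard
    _ = (2:ℝ)^(k:ℕ) := by push_cast; ring
    _ < _ := h2k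
end
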